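/- The dual group of the P-adic solenoid Σ_P is isomorphic (as an abstract group) to the additive group { m / (P(0)P(1)⋯P(n)) : m ∈ ℤ, n ∈ ℕ } ⊆ ℚ. -/

import Mathlib

/-- The `P`-adic solenoid, as a subgroup of `𝕋^ω`. -/
noncomputable def solenoid (P : ℕ → ℕ) : Subgroup (ℕ → Circle) where
  carrier := {g : ℕ → Circle | ∀ l, g l = g (l + 1) ^ P l}
  one_mem' := by intro l; simp
  mul_mem' := by
    intro a b ha hb l
    simp only [Pi.mul_apply, mul_pow, ← ha l, ← hb l]
  inv_mem' := by
    intro a ha l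
    simp only [Pi.inv_apply, inv_pow, ← ha l]

section Stmt14Aux

open Complex Real Finset Topology intervalIntegral

set_option linter.unnecessarySimpa false

lemma real_char (g : ℝ → ℂ) (hc : Continuous g) (h0 : g 0 = 1)
    (hadd : ∀ s t, g (s + t) = g s * g t) : ∃ k : ℂ, ∀ t, g t = Complex.exp (k * t) := by
  set G : ℝ → ℂ := fun t => ∫ s in (0:ℝ)..t, g s with hG
  have hGd : ∀ t, HasDerivAt G (g t) t := by
    intro t
    exact intervalIntegral.integral_hasDerivAt_right ((hc.intervalIntegrable _ _))
      (hc.stronglyMeasurableAtFilter _ _) hc.continuousAt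
  have hG0 : G 0 = 0 := intervalIntegral.integral_same
  -- find a with G a ≠ 0
  obtain ⟨a, ha, ha0⟩ : ∃ a, G a ≠ 0 ∧ a ≠ 0 := by
    have hslope := (hasDerivAt_iff_tendsto_slope.mp (hGd 0))
    rw [h0] at hslope
    have h1 : ∀ᶠ b in nhdsWithin 0 {0}ᶜ, slope G 0 b ≠ 0 :=
      hslope.eventually_ne one_ne_zero
    obtain ⟨a, ha, ha'⟩ := (h1.and self_mem_nhdsWithin).exists
    refine ⟨a, fun h => ha ?_, ha'⟩
    simp [slope_def_module, h, hG0]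
  -- key identity
  have key : ∀ t, G (t + a) - G t = g t * G a := by
    intro t
    have h1 : (∫ s in (0:ℝ)..(t+a), g s) - (∫ s in (0:ℝ)..t, g s) = ∫ s in t..(t+a), g s := by
      rw [← intervalIntegral.integral_add_adjacent_intervals
        (hc.intervalIntegrable 0 t) (hc.intervalIntegrable t (t+a))]
      ring
    have h2 : (∫ s in t..(t+a), g s) = ∫ s in (0:ℝ)..a, g (t + s) := by
      rw [intervalIntegral.integral_comp_add_left (fun x => g x) t]
      norm_num
    show (∫ s in (0:ℝ)..(t+a), g s) - (∫ s in (0:ℝ)..t, g s) = g t * ∫ s in (0:ℝ)..a, g s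
    rw [h1, h2]
    simp only [hadd]
    rw [intervalIntegral.integral_const_mul]
  set k : ℂ := (g a - 1) * (G a)⁻¹ with hk
  have hgd : ∀ t, HasDerivAt g (g t * k) t := by
    intro t
    have h1 : HasDerivAt (fun t => G (t + a)) (g (t + a)) t := by
      have hid : HasDerivAt (fun x : ℝ => x + a) 1 t := (hasDerivAt_id t).add_const a
      exact (hGd (t + a)).comp_add_const t a
    have hf : HasDerivAt (fun t => (G (t + a) - G t) * (G a)⁻¹)
        ((g (t + a) - g t) * (G a)⁻¹) t := (h1.sub (hGd t)).mul_const _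
    have heq : (fun t => (G (t + a) - G t) * (G a)⁻¹) = g := by
      funext t
      rw [key t]
      field_simp
    rw [heq] at hf
    convert hf using 1
    rw [hadd t a, hk]
    field_simp
  have hconst : ∀ t, g t * Complex.exp (-(k * t)) = 1 := by
    have hd : ∀ t, HasDerivAt (fun t => g t * Complex.exp (-(k * t))) 0 t := by
      intro t
      have h1 : HasDerivAt (fun t : ℝ => Complex.exp (-(k * t))) (-k * Complex.exp (-(k * t))) t := by
        have h2 : HasDerivAt (fun t : ℝ => -(k * t)) (-k) t := by
          convert ((hasDerivAt_id t).ofReal_comp.const_mul k).neg using 1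
          case e'_9 => simp
          all_goals rfl
        simpa [mul_comm] using h2.cexp
      have := (hgd t).mul h1
      convert this using 1
      case e'_9 => ring
      all_goals rfl
    intro t
    have := is_const_of_deriv_eq_zero (𝕜 := ℝ)
      (f := fun t => g t * Complex.exp (-(k * t)))
      (fun x => (hd x).differentiableAt) (fun x => (hd x).deriv) t 0
    simpa [h0] using this
  refine ⟨k, fun t => ?_⟩
  have h3 := hconst t
  rw [Complex.exp_neg] at h3
  have h4 : Complex.exp (k * t) ≠ 0 := Complex.exp_ne_zero _
  field_simp at h3
  exact h3

lemma circle_coe_pow (z : Circle) (n : ℕ) : ((z ^ n : Circle) : ℂ) = (z:ℂ) ^ n :=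
  Circle.coe_pow z n
lemma circle_coe_zpow (z : Circle) (n : ℤ) : ((z ^ n : Circle) : ℂ) = (z:ℂ) ^ n := by
  cases n with
  | ofNat k => simpa using circle_coe_pow z k
  | negSucc k => simp [zpow_negSucc, circle_coe_pow]


-- no small subgroups
lemma circle_no_small (z : Circle) (h : ∀ k : ℕ, 0 < ((z ^ k : Circle) : ℂ).re) : z = 1 := by
  by_contra hz
  set t := Complex.arg (z : ℂ) with ht
  have hzt : Circle.exp t = z := Circle.exp_arg z
  have ht0 : t ≠ 0 := fun h0 => hz (by rw [← hzt, h0, Circle.exp_zero])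
  have hre : ∀ k : ℕ, 0 < Real.cos (k * t) := by
    intro k
    have hk := h k
    rw [← hzt] at hk
    have hco : ((Circle.exp t ^ k : Circle) : ℂ) = Complex.exp ((k * t : ℝ) * I) := by
      rw [circle_coe_pow, Circle.coe_exp, ← Complex.exp_nat_mul]
      push_cast; ring_nf
    rw [hco, Complex.exp_ofReal_mul_I_re] at hk
    exact hk
  have htpi : |t| ≤ π := abs_le.2 ⟨(Complex.neg_pi_lt_arg _).le, Complex.arg_le_pi _⟩
  have hc1 : 0 < Real.cos |t| := by
    rw [Real.cos_abs]
    simpa using hre 1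
  have htlt : |t| < π / 2 := by
    by_contra hle
    push_neg at hle
    have : Real.cos |t| ≤ 0 :=
      Real.cos_nonpos_of_pi_div_two_le_of_le hle (by linarith [Real.pi_pos])
    linarith
  have htabs : 0 < |t| := abs_pos.2 ht0
  set k : ℕ := ⌈π / (2 * |t|)⌉₊ with hk
  have hk1 : π / (2 * |t|) ≤ k := Nat.le_ceil _
  have hk2 : (k : ℝ) < π / (2 * |t|) + 1 := Nat.ceil_lt_add_one (by positivity)
  have h1 : π / 2 ≤ k * |t| := by
    rw [div_le_iff₀ (by positivity)] at hk1
    nlinarith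
  have h2 : k * |t| < π := by
    have h3 : (k:ℝ) * |t| < (π / (2 * |t|) + 1) * |t| := by nlinarith
    have h4 : (π / (2 * |t|) + 1) * |t| = π / 2 + |t| := by field_simp
    nlinarith [Real.pi_pos]
  have hcos : Real.cos (k * t) ≤ 0 := by
    rw [← Real.cos_abs]
    have habs : |(k : ℝ) * t| = k * |t| := by rw [abs_mul, Nat.abs_cast]
    rw [habs]
    exact Real.cos_nonpos_of_pi_div_two_le_of_le h1 (by linarith [Real.pi_pos])
  linarith [hre k]

-- characters of the circle
lemma circle_char (f : Circle → Circle) (hf : Continuous f)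
    (hmul : ∀ x y, f (x * y) = f x * f y) : ∃ m : ℤ, ∀ z, f z = z ^ m := by
  have h1 : f 1 = 1 := by
    have := hmul 1 1
    rw [mul_one] at this
    exact (mul_eq_left.mp this.symm)
  set g : ℝ → ℂ := fun t => (f (Circle.exp t) : ℂ) with hg
  obtain ⟨k, hk⟩ := real_char g
    (continuous_induced_dom.comp (hf.comp Circle.exp.continuous))
    (by simp [hg, Circle.exp_zero, h1])
    (by intro s t; simp only [hg, Circle.exp_add, hmul, Circle.coe_mul])
  obtain ⟨m, hm⟩ : ∃ m : ℤ, k = m * I := by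
    have h2 : g (2 * π) = 1 := by simp [hg, Circle.exp_two_pi, h1]
    rw [hk (2 * π), Complex.exp_eq_one_iff] at h2
    obtain ⟨n, hn⟩ := h2
    refine ⟨n, ?_⟩
    have hpi : ((2 * π : ℝ) : ℂ) ≠ 0 := by
      simp [Complex.ofReal_ne_zero, Real.pi_ne_zero]
    apply mul_right_cancel₀ hpi
    rw [hn]
    push_cast
    ring
  refine ⟨m, fun z => ?_⟩
  have hz : Circle.exp (Complex.arg z) = z := Circle.exp_arg z
  have h5 := hk (Complex.arg z)
  rw [hg] at h5
  simp only at h5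
  rw [hz] at h5
  ext
  have hzc : (z : ℂ) = Complex.exp ((Complex.arg z : ℂ) * I) := by
    rw [← Circle.coe_exp, hz]
  have hrhs : ((z ^ m : Circle) : ℂ) = Complex.exp (k * (Complex.arg z : ℂ)) := by
    rw [circle_coe_zpow]
    conv_lhs => rw [hzc]
    rw [← Complex.exp_int_mul, hm]
    ring_nf
  rw [h5, hrhs]

lemma circle_coe_zpow_ (z : Circle) (n : ℤ) : ((z ^ n : Circle) : ℂ) = (z:ℂ) ^ n :=
  circle_coe_zpow z n

variable {P : ℕ → ℕ}

lemma mem_solenoid {g : ℕ → Circle} : g ∈ solenoid P ↔ ∀ l, g l = g (l + 1) ^ P l := Iff.rfl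

lemma sol_rel {g : ℕ → Circle} (hg : g ∈ solenoid P) {a b : ℕ} (h : a ≤ b) :
    g a = g b ^ (∏ i ∈ Finset.Ico a b, P i) := by
  induction b with
  | zero =>
    have : a = 0 := Nat.le_zero.mp h
    subst this; simp
  | succ b ih =>
    rcases Nat.lt_or_ge a (b+1) with h'|h'
    · have hab : a ≤ b := Nat.lt_succ_iff.mp h'
      rw [Finset.prod_Ico_succ_top hab, ih hab, mem_solenoid.mp hg b, ← pow_mul, mul_comm]
    · have : a = b + 1 := le_antisymm h h'
      subst this; simp

/-- The standard lift: an element of the solenoid whose `n`-th coordinate is `Circle.exp t`. -/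
noncomputable def liftFun (P : ℕ → ℕ) (n : ℕ) (t : ℝ) : ℕ → Circle :=
  fun l => Circle.exp (t * ((∏ i ∈ range n, (P i : ℝ)) / ∏ i ∈ range l, (P i : ℝ)))

lemma circle_exp_pow (t : ℝ) (k : ℕ) : (Circle.exp t) ^ k = Circle.exp (k * t) := by
  induction k with
  | zero => simp [Circle.exp_zero]
  | succ k ih =>
    rw [pow_succ, ih, ← Circle.exp_add]
    congr 1
    push_cast
    ring

lemma liftFun_mem (hP : ∀ i, 0 < P i) (n : ℕ) (t : ℝ) : liftFun P n t ∈ solenoid P := by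
  intro l
  rw [liftFun, liftFun, circle_exp_pow]
  congr 1
  have h1 : (∏ i ∈ range (l+1), (P i : ℝ)) = (∏ i ∈ range l, (P i : ℝ)) * P l :=
    Finset.prod_range_succ _ _
  have h2 : (∏ i ∈ range l, (P i : ℝ)) ≠ 0 :=
    Finset.prod_ne_zero_iff.mpr fun i _ => Nat.cast_ne_zero.mpr (hP i).ne'
  have h3 : (P l : ℝ) ≠ 0 := Nat.cast_ne_zero.mpr (hP l).ne'
  rw [h1]
  field_simp

lemma liftFun_self (hP : ∀ i, 0 < P i) (n : ℕ) (t : ℝ) : liftFun P n t n = Circle.exp t := by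
  have h2 : (∏ i ∈ range n, (P i : ℝ)) ≠ 0 :=
    Finset.prod_ne_zero_iff.mpr fun i _ => Nat.cast_ne_zero.mpr (hP i).ne'
  rw [liftFun, div_self h2, mul_one]

lemma sol_surj (hP : ∀ i, 0 < P i) (n : ℕ) (z : Circle) :
    ∃ g : ↥(solenoid P), (g : ℕ → Circle) n = z :=
  ⟨⟨liftFun P n (Complex.arg z), liftFun_mem hP n _⟩, by
    simpa [liftFun_self hP] using Circle.exp_arg z⟩

lemma sol_closed : IsClosed (solenoid P : Set (ℕ → Circle)) := by
  have : (solenoid P : Set (ℕ → Circle)) =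
      ⋂ l, {g : ℕ → Circle | g l = g (l + 1) ^ P l} := by
    ext g; simp [mem_solenoid, Set.mem_iInter]
  rw [this]
  exact isClosed_iInter fun l =>
    isClosed_eq (continuous_apply l) ((continuous_apply (l+1)).pow _)

instance : CompactSpace ↥(solenoid P) :=
  isCompact_iff_compactSpace.mp (sol_closed.isCompact)

/-- Every character is trivial on the kernel of some coordinate map. -/
lemma char_trivial_on_ker (χ : ContinuousMonoidHom (↥(solenoid P)) Circle) :
    ∃ n, ∀ g : ↥(solenoid P), (g : ℕ → Circle) n = 1 → χ g = 1 := by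
  have hU : IsOpen {w : Circle | 0 < (w : ℂ).re} :=
    isOpen_lt continuous_const (Complex.continuous_re.comp continuous_induced_dom)
  have hV : χ ⁻¹' {w : Circle | 0 < (w : ℂ).re} ∈ nhds (1 : ↥(solenoid P)) := by
    refine IsOpen.mem_nhds (hU.preimage χ.continuous) ?_
    simp [Set.mem_preimage, map_one]
  rw [nhds_induced (Subtype.val) 1, Filter.mem_comap] at hV
  obtain ⟨T, hT, hTsub⟩ := hV
  rw [nhds_pi, Filter.mem_pi] at hT
  obtain ⟨I, hIfin, t, ht, hsub⟩ := hT
  set n : ℕ := hIfin.toFinset.sup id with hn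
  refine ⟨n, fun g hg => ?_⟩
  have hcoord : ∀ k : ℕ, ((g ^ k : ↥(solenoid P)) : ℕ → Circle) n = 1 := by
    intro k
    rw [SubmonoidClass.coe_pow, Pi.pow_apply, hg, one_pow]
  apply circle_no_small
  intro k
  rw [← map_pow]
  have hmem : ((g ^ k : ↥(solenoid P)) : ℕ → Circle) ∈ Set.pi I t := by
    intro i hi
    have hin : i ≤ n := by
      rw [hn]
      exact Finset.le_sup (f := id) (hIfin.mem_toFinset.mpr hi)
    have := sol_rel (g ^ k).2 hin
    rw [this, hcoord k, one_pow]
    have h9 := mem_of_mem_nhds (ht i)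
    simpa using h9
  exact hTsub (hsub hmem)

/-- Classification of characters of the solenoid. -/
lemma char_classify (hP : ∀ i, 0 < P i) (χ : ContinuousMonoidHom (↥(solenoid P)) Circle) :
    ∃ (n : ℕ) (m : ℤ), ∀ g : ↥(solenoid P), χ g = ((g : ℕ → Circle) n) ^ m := by
  obtain ⟨n, hn⟩ := char_trivial_on_ker χ
  have key : ∀ g h : ↥(solenoid P),
      (g : ℕ → Circle) n = (h : ℕ → Circle) n → χ g = χ h := by
    intro g h hgh
    have h1 : ((g * h⁻¹ : ↥(solenoid P)) : ℕ → Circle) n = 1 := by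
      push_cast
      rw [Pi.mul_apply, Pi.inv_apply, hgh, mul_inv_cancel]
    have h2 := hn _ h1
    rwa [map_mul, map_inv, mul_inv_eq_one] at h2
  choose s hs using sol_surj hP n
  set f : Circle → Circle := fun z => χ (s z) with hf
  have hfpi : ∀ g : ↥(solenoid P), f ((g : ℕ → Circle) n) = χ g := by
    intro g
    exact key _ _ (hs _)
  have hmul : ∀ z w, f (z * w) = f z * f w := by
    intro z w
    show χ (s (z * w)) = χ (s z) * χ (s w)
    rw [← map_mul]
    apply key
    rw [hs]
    push_cast [Pi.mul_apply, hs]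
    rfl
  have hcont : Continuous f := by
    have hπ : Continuous (fun g : ↥(solenoid P) => (g : ℕ → Circle) n) :=
      (continuous_apply n).comp continuous_subtype_val
    have hq : IsQuotientMap (fun g : ↥(solenoid P) => (g : ℕ → Circle) n) :=
      (hπ.isClosedMap).isQuotientMap hπ (fun z => ⟨s z, hs z⟩)
    rw [hq.continuous_iff]
    have : (f ∘ fun g : ↥(solenoid P) => (g : ℕ → Circle) n) = χ := funext hfpi
    rw [this]
    exact χ.continuous
  obtain ⟨m, hm⟩ := circle_char f hcont hmul
  exact ⟨n, m, fun g => by rw [← hfpi g, hm]⟩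

lemma circle_zpow_inj {a b : ℤ} (h : ∀ z : Circle, z ^ a = z ^ b) : a = b := by
  by_contra hne
  have hc : a - b ≠ 0 := sub_ne_zero.mpr hne
  have h1 : ∀ z : Circle, z ^ (a - b) = 1 := by
    intro z
    rw [zpow_sub, h z, mul_inv_cancel]
  have h2 := h1 (Circle.exp (π / (a - b)))
  have h3 : (Circle.exp (π / (a - b))) ^ (a - b) = Circle.exp π := by
    have : ∀ (t : ℝ) (n : ℤ), (Circle.exp t) ^ n = Circle.exp (n * t) := by
      intro t n
      ext
      rw [circle_coe_zpow_, Circle.coe_exp, Circle.coe_exp, ← Complex.exp_int_mul]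
      push_cast
      ring_nf
    rw [this]
    congr 1
    have hne' : ((a : ℝ) - b) ≠ 0 := by
      have : ((a - b : ℤ) : ℝ) ≠ 0 := Int.cast_ne_zero.mpr hc
      push_cast at this
      exact this
    push_cast
    rw [mul_comm]
    exact div_mul_cancel₀ π hne'
  rw [h3] at h2
  have h4 : ((Circle.exp π : Circle) : ℂ) = -1 := by
    rw [Circle.coe_exp, Complex.exp_pi_mul_I]
  rw [h2] at h4
  norm_num at h4

/-- Key computation: turn a pointwise character identity into a rational identity. -/
lemma keyE (hP : ∀ i, 0 < P i) {N n n' : ℕ} {M m m' : ℤ}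
    (h : ∀ g : ↥(solenoid P), ((g : ℕ → Circle) N) ^ M
      = ((g : ℕ → Circle) n) ^ m * ((g : ℕ → Circle) n') ^ m') :
    (M : ℚ) / (∏ i ∈ range N, (P i : ℚ))
      = m / (∏ i ∈ range n, (P i : ℚ)) + m' / (∏ i ∈ range n', (P i : ℚ)) := by
  set L := max N (max n n') with hL
  have hNL : N ≤ L := le_max_left _ _
  have hnL : n ≤ L := le_trans (le_max_left _ _) (le_max_right _ _)
  have hn'L : n' ≤ L := le_trans (le_max_right _ _) (le_max_right _ _)
  have hpow : ∀ (g : ↥(solenoid P)) (k : ℕ) (hk : k ≤ L) (x : ℤ),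
      ((g : ℕ → Circle) k) ^ x
        = ((g : ℕ → Circle) L) ^ ((∏ i ∈ Finset.Ico k L, P i : ℕ) * x) := by
    intro g k hk x
    rw [sol_rel g.2 hk, ← zpow_natCast ((g : ℕ → Circle) L), ← zpow_mul]
  have hint : ((∏ i ∈ Finset.Ico N L, P i : ℕ) : ℤ) * M
      = (∏ i ∈ Finset.Ico n L, P i : ℕ) * m + (∏ i ∈ Finset.Ico n' L, P i : ℕ) * m' := by
    apply circle_zpow_inj
    intro z
    obtain ⟨g, hg⟩ := sol_surj hP L z
    have := h g
    rw [hpow g N hNL, hpow g n hnL, hpow g n' hn'L, ← zpow_add] at this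
    rw [← hg]
    exact this
  -- now the rational computation
  have hQ0 : ∀ s : Finset ℕ, (∏ i ∈ s, (P i : ℚ)) ≠ 0 :=
    fun s => Finset.prod_ne_zero_iff.mpr fun i _ => Nat.cast_ne_zero.mpr (hP i).ne'
  have hsplit : ∀ (k : ℕ), k ≤ L → (∏ i ∈ range L, (P i : ℚ))
      = (∏ i ∈ range k, (P i : ℚ)) * (∏ i ∈ Finset.Ico k L, (P i : ℚ)) :=
    fun k hk => (Finset.prod_range_mul_prod_Ico _ hk).symm
  have efrac : ∀ (k : ℕ) (hk : k ≤ L) (x : ℤ),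
      (x : ℚ) / (∏ i ∈ range k, (P i : ℚ))
        = ((∏ i ∈ Finset.Ico k L, (P i : ℚ)) * x) / (∏ i ∈ range L, (P i : ℚ)) := by
    intro k hk x
    rw [div_eq_div_iff (hQ0 _) (hQ0 _), hsplit k hk]
    ring
  rw [efrac N hNL, efrac n hnL, efrac n' hn'L, ← add_div]
  congr 1
  have : ((∏ i ∈ Finset.Ico N L, P i : ℕ) : ℚ) * M
      = (∏ i ∈ Finset.Ico n L, P i : ℕ) * m + (∏ i ∈ Finset.Ico n' L, P i : ℕ) * m' := by
    exact_mod_cast congrArg (fun x : ℤ => (x : ℚ)) hint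
  push_cast at this ⊢
  linarith
/-- converse direction -/
lemma keyE' (hP : ∀ i, 0 < P i) {n n' : ℕ} {m m' : ℤ}
    (h : (m : ℚ) / (∏ i ∈ range n, (P i : ℚ)) = m' / (∏ i ∈ range n', (P i : ℚ))) :
    ∀ g : ↥(solenoid P), ((g : ℕ → Circle) n) ^ m = ((g : ℕ → Circle) n') ^ m' := by
  set L := max n n' with hL
  have hnL : n ≤ L := le_max_left _ _
  have hn'L : n' ≤ L := le_max_right _ _
  have hQ0 : ∀ s : Finset ℕ, (∏ i ∈ s, (P i : ℚ)) ≠ 0 :=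
    fun s => Finset.prod_ne_zero_iff.mpr fun i _ => Nat.cast_ne_zero.mpr (hP i).ne'
  have hsplit : ∀ (k : ℕ), k ≤ L → (∏ i ∈ range L, (P i : ℚ))
      = (∏ i ∈ range k, (P i : ℚ)) * (∏ i ∈ Finset.Ico k L, (P i : ℚ)) :=
    fun k hk => (Finset.prod_range_mul_prod_Ico _ hk).symm
  have hint : ((∏ i ∈ Finset.Ico n L, P i : ℕ) : ℤ) * m
      = (∏ i ∈ Finset.Ico n' L, P i : ℕ) * m' := by
    rw [div_eq_div_iff (hQ0 _) (hQ0 _)] at h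
    have e1 := hsplit n hnL
    have e2 := hsplit n' hn'L
    have h9 := hQ0 (range L)
    have hq : ((∏ i ∈ Finset.Ico n L, (P i : ℚ)) * m)
        = (∏ i ∈ Finset.Ico n' L, (P i : ℚ)) * m' := by
      apply mul_right_cancel₀ h9
      linear_combination ((∏ i ∈ Finset.Ico n L, (P i : ℚ)) * (∏ i ∈ Finset.Ico n' L, (P i : ℚ))) * h + ((m : ℚ) * (∏ i ∈ Finset.Ico n L, (P i : ℚ))) * e2 - ((m' : ℚ) * (∏ i ∈ Finset.Ico n' L, (P i : ℚ))) * e1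
    exact_mod_cast hq
  intro g
  have hpow : ∀ (k : ℕ) (hk : k ≤ L) (x : ℤ),
      ((g : ℕ → Circle) k) ^ x
        = ((g : ℕ → Circle) L) ^ ((∏ i ∈ Finset.Ico k L, P i : ℕ) * x) := by
    intro k hk x
    rw [sol_rel g.2 hk, ← zpow_natCast ((g : ℕ → Circle) L), ← zpow_mul]
  rw [hpow n hnL, hpow n' hn'L, hint]

/-- The coordinate character `g ↦ (g n) ^ m`. -/
noncomputable def coordChar (P : ℕ → ℕ) (n : ℕ) (m : ℤ) :
    ContinuousMonoidHom (↥(solenoid P)) Circle where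
  toFun := fun g => ((g : ℕ → Circle) n) ^ m
  map_one' := by simp
  map_mul' := by
    intro a b
    push_cast
    rw [Pi.mul_apply, mul_zpow]
  continuous_toFun := ((continuous_apply n).comp continuous_subtype_val).zpow m

end Stmt14Aux


open Finset in
/-- The dual group of the `P`-adic solenoid `Σ_P` (the group of continuous homomorphisms
`Σ_P → 𝕋`, written additively) is isomorphic as an abstract group to the additive
subgroup `{ m / (P 0 * P 1 * ⋯ * P n) : m ∈ ℤ, n ∈ ℕ }` of `ℚ`. -/
theorem stmt_14 (P : ℕ → ℕ) (hP : ∀ i, (P i).Prime) :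
    ∃ φ : Additive (ContinuousMonoidHom (solenoid P) Circle) →+ ℚ,
      Function.Injective φ ∧
      Set.range φ =
        {q : ℚ | ∃ (m : ℤ) (n : ℕ), q = (m : ℚ) / ∏ i ∈ range (n + 1), (P i : ℚ)} := by
  have hP0 : ∀ i, 0 < P i := fun i => (hP i).pos
  have hcc := fun χ : ContinuousMonoidHom (↥(solenoid P)) Circle => char_classify hP0 χ
  choose en em hc using hcc
  set v : ContinuousMonoidHom (↥(solenoid P)) Circle → ℚ :=
    fun χ => (em χ : ℚ) / (∏ i ∈ range (en χ), (P i : ℚ)) with hv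
  -- the key uniqueness: v χ is the unique rational attached to χ
  have huniq : ∀ (χ : ContinuousMonoidHom (↥(solenoid P)) Circle) (n : ℕ) (m : ℤ),
      (∀ g : ↥(solenoid P), χ g = ((g : ℕ → Circle) n) ^ m) →
      v χ = (m : ℚ) / (∏ i ∈ range n, (P i : ℚ)) := by
    intro χ n m hm
    have h : ∀ g : ↥(solenoid P), ((g : ℕ → Circle) (en χ)) ^ (em χ)
        = ((g : ℕ → Circle) n) ^ m * ((g : ℕ → Circle) 0) ^ (0 : ℤ) := by
      intro g
      rw [← hc χ g, ← hm g, zpow_zero, mul_one]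
    have := keyE hP0 h
    simpa using this
  refine ⟨{ toFun := fun χ => v (Additive.toMul χ)
            map_zero' := ?_
            map_add' := ?_ }, ?_, ?_⟩
  · -- map_zero
    have h1 : ∀ g : ↥(solenoid P),
        (Additive.toMul (0 : Additive (ContinuousMonoidHom (↥(solenoid P)) Circle))) g
          = ((g : ℕ → Circle) 0) ^ (0 : ℤ) := by
      intro g
      simp
    show v (Additive.toMul (0 : Additive (ContinuousMonoidHom (↥(solenoid P)) Circle))) = 0
    rw [huniq _ 0 0 h1]
    simp
  · -- map_add
    intro x y
    show v (Additive.toMul (x + y)) = v (Additive.toMul x) + v (Additive.toMul y)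
    set χ₁ := Additive.toMul x
    set χ₂ := Additive.toMul y
    have h1 : ∀ g : ↥(solenoid P), (Additive.toMul (x + y)) g
        = ((g : ℕ → Circle) (en χ₁)) ^ (em χ₁) * ((g : ℕ → Circle) (en χ₂)) ^ (em χ₂) := by
      intro g
      have : (Additive.toMul (x + y)) g = χ₁ g * χ₂ g := rfl
      rw [this, hc χ₁ g, hc χ₂ g]
    have h2 : ∀ g : ↥(solenoid P), ((g : ℕ → Circle) (en (Additive.toMul (x+y)))) ^ (em (Additive.toMul (x+y)))
        = ((g : ℕ → Circle) (en χ₁)) ^ (em χ₁) * ((g : ℕ → Circle) (en χ₂)) ^ (em χ₂) := by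
      intro g
      rw [← hc _ g]
      exact h1 g
    exact keyE hP0 h2
  · -- injectivity
    intro x y hxy
    change v (Additive.toMul x) = v (Additive.toMul y) at hxy
    apply Additive.toMul.injective
    apply ContinuousMonoidHom.ext
    intro g
    rw [hc (Additive.toMul x) g, hc (Additive.toMul y) g]
    exact keyE' hP0 hxy g
  · -- range
    ext q
    simp only [Set.mem_range, Set.mem_setOf_eq]
    constructor
    · rintro ⟨χ, rfl⟩
      refine ⟨em (Additive.toMul χ) * P (en (Additive.toMul χ)), en (Additive.toMul χ), ?_⟩
      have hne : ∀ s : Finset ℕ, (∏ i ∈ s, (P i : ℚ)) ≠ 0 :=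
        fun s => Finset.prod_ne_zero_iff.mpr fun i _ => Nat.cast_ne_zero.mpr (hP0 i).ne'
      show v (Additive.toMul χ)
          = ((em (Additive.toMul χ) * P (en (Additive.toMul χ)) : ℤ) : ℚ)
            / ∏ i ∈ range (en (Additive.toMul χ) + 1), (P i : ℚ)
      show (em (Additive.toMul χ) : ℚ) / ∏ i ∈ range (en (Additive.toMul χ)), (P i : ℚ) = _
      rw [div_eq_div_iff (hne _) (hne _), Finset.prod_range_succ]
      push_cast
      ring
    · rintro ⟨m, n, rfl⟩
      refine ⟨Additive.ofMul (coordChar P (n+1) m), ?_⟩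
      show v (Additive.toMul (Additive.ofMul (coordChar P (n+1) m))) = _
      have h1 : ∀ g : ↥(solenoid P), (Additive.toMul (Additive.ofMul (coordChar P (n+1) m))) g
          = ((g : ℕ → Circle) (n+1)) ^ m := fun g => rfl
      rw [huniq _ (n+1) m h1]
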